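/- Under the same hypotheses, sup over w ∈ V of (−a(w + 2v, w) + 2 l(w)) equals a(u−v, u−v) for every v ∈ V. -/
import Mathlib


theorem minorant_sup_equals_energy_error {V : Type*} [NormedAddCommGroup V]
    [InnerProductSpace ℝ V] [CompleteSpace V]
    (a : V →ₗ[ℝ] V →ₗ[ℝ] ℝ) (l : V →L[ℝ] ℝ)
    (hsymm : ∀ v w : V, a v w = a w v)
    (hcoer : ∃ c > 0, ∀ v : V, c * ‖v‖ ^ 2 ≤ a v v)
    (hbdd : ∃ C : ℝ, ∀ v w : V, |a v w| ≤ C * ‖v‖ * ‖w‖)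
    (u : V) (hu : ∀ w : V, a u w = l w) :
    ∀ v : V,
      IsGreatest {r : ℝ | ∃ w : V, r = -(a (w + (2 : ℝ) • v) w) + 2 * l w}
        (a (u - v) (u - v)) := by
  obtain ⟨c, hc, hcoer⟩ := hcoer
  intro v
  constructor
  · refine ⟨u - v, ?_⟩
    have h1 := hu (u - v)
    simp only [map_add, map_sub, map_smul, LinearMap.add_apply, LinearMap.sub_apply,
      LinearMap.smul_apply, smul_eq_mul] at *
    nlinarith [hsymm u v, hsymm v u]
  · rintro r ⟨w, rfl⟩
    have hl := hu w
    have hpos : 0 ≤ a (u - v - w) (u - v - w) :=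
      le_trans (by positivity) (hcoer _)
    simp only [map_add, map_sub, map_smul, LinearMap.add_apply, LinearMap.sub_apply,
      LinearMap.smul_apply, smul_eq_mul] at *
    nlinarith [hsymm u v, hsymm u w, hsymm v w]
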